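/- arXiv:1508.02495 — 3 statements merged into one kernel-verified Lean document; each statement's English description precedes it below -/
import Mathlib

section
/- Let t : ℕ → ℕ satisfy t(0) = 1, t(1) = 3, t(n+2) = 2·t(n+1) + t(n). Then (1/n)·log₂(t(n)) converges to log₂(1+√2) as n → ∞. -/
open Filter

/-- The constrained coding capacity: `(1/n) log₂ t(n) → log₂ (1 + √2)`. -/
theorem stmt_2
    (t : ℕ → ℕ)
    (h0 : t 0 = 1) (h1 : t 1 = 3)
    (hrec : ∀ n, t (n + 2) = 2 * t (n + 1) + t n) :
    Tendsto (fun n : ℕ => (1 / (n : ℝ)) * Real.logb 2 (t n)) atTop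
      (nhds (Real.logb 2 (1 + Real.sqrt 2))) := by
  set α : ℝ := 1 + Real.sqrt 2 with hα
  have hs0 : (0:ℝ) < Real.sqrt 2 := Real.sqrt_pos.mpr (by norm_num)
  have hα1 : (1:ℝ) < α := by rw [hα]; linarith
  have hα0 : (0:ℝ) < α := by linarith
  have hsq : Real.sqrt 2 ^ 2 = 2 := Real.sq_sqrt (by norm_num)
  have hα2 : α ^ 2 = 2 * α + 1 := by
    simp only [hα]; nlinarith [hsq]
  -- two-sided bounds by two-step induction
  have hbound : ∀ n : ℕ, (α ^ n ≤ (t n : ℝ) ∧ (t n : ℝ) ≤ 3 * α ^ n) ∧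
      (α ^ (n+1) ≤ (t (n+1) : ℝ) ∧ (t (n+1) : ℝ) ≤ 3 * α ^ (n+1)) := by
    intro n
    induction n with
    | zero =>
      constructor
      · simp [h0]
      · constructor
        · simp [h1]; nlinarith
        · simp [h1]; nlinarith
    | succ k ih =>
      refine ⟨ih.2, ?_, ?_⟩
      · have h := ih.1.1; have h' := ih.2.1
        have : (t (k+2) : ℝ) = 2 * (t (k+1) : ℝ) + (t k : ℝ) := by
          rw [hrec k]; push_cast; ring
        rw [this]
        have hpow : α ^ (k+2) = α ^ k * α ^ 2 := by ring
        rw [hpow, hα2]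
        nlinarith [pow_pos hα0 k, pow_succ α k]
      · have h := ih.1.2; have h' := ih.2.2
        have : (t (k+2) : ℝ) = 2 * (t (k+1) : ℝ) + (t k : ℝ) := by
          rw [hrec k]; push_cast; ring
        rw [this]
        have hpow : α ^ (k+2) = α ^ k * α ^ 2 := by ring
        rw [hpow, hα2]
        nlinarith [pow_pos hα0 k, pow_succ α k]
  have hlow : ∀ n : ℕ, α ^ n ≤ (t n : ℝ) := fun n => (hbound n).1.1
  have hup : ∀ n : ℕ, (t n : ℝ) ≤ 3 * α ^ n := fun n => (hbound n).1.2
  have hb : (1:ℝ) < 2 := by norm_num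
  -- squeeze
  have hL : Tendsto (fun _ : ℕ => Real.logb 2 α) atTop (nhds (Real.logb 2 α)) :=
    tendsto_const_nhds
  have hU : Tendsto (fun n : ℕ => Real.logb 2 α + Real.logb 2 3 / (n : ℝ)) atTop
      (nhds (Real.logb 2 α)) := by
    have : Tendsto (fun n : ℕ => Real.logb 2 3 / (n : ℝ)) atTop (nhds 0) :=
      tendsto_const_nhds.div_atTop tendsto_natCast_atTop_atTop
    simpa using hL.add this
  refine tendsto_of_tendsto_of_tendsto_of_le_of_le' hL hU ?_ ?_
  · filter_upwards [eventually_ge_atTop 1] with n hn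
    have hn0 : (0:ℝ) < (n:ℝ) := by exact_mod_cast hn
    have h1' : Real.logb 2 (α ^ n) ≤ Real.logb 2 ((t n : ℝ)) :=
      Real.logb_le_logb_of_le hb (pow_pos hα0 n) (hlow n)
    rw [Real.logb_pow] at h1'
    rw [one_div, mul_comm, ← div_eq_mul_inv, le_div_iff₀ hn0]
    linarith
  · filter_upwards [eventually_ge_atTop 1] with n hn
    have hn0 : (0:ℝ) < (n:ℝ) := by exact_mod_cast hn
    have htpos : (0:ℝ) < (t n : ℝ) := lt_of_lt_of_le (pow_pos hα0 n) (hlow n)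
    have h2' : Real.logb 2 ((t n : ℝ)) ≤ Real.logb 2 (3 * α ^ n) := by
      exact Real.logb_le_logb_of_le hb htpos (hup n)
    rw [Real.logb_mul (by norm_num) (by positivity), Real.logb_pow] at h2'
    rw [one_div, mul_comm, ← div_eq_mul_inv, div_le_iff₀ hn0]
    have : (Real.logb 2 α + Real.logb 2 3 / (n:ℝ)) * (n:ℝ)
        = Real.logb 2 3 + (n:ℝ) * Real.logb 2 α := by
      field_simp; ring
    rw [this]; linarith
end

section
/- Let t_N : ℕ → ℕ count the ISI-free strings of length n over the alphabet {−, M₁, ..., M_N} with channel memory k = 1 (no molecule symbol appears in two consecutive positions). Then t_N(0) = 1, t_N(1) = N+1, and t_N(n+2) = N·t_N(n+1) + t_N(n) for all n. -/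
namespace Stmt5Aux

variable {N : ℕ}

def ISI (N n : ℕ) (s : Fin n → Option (Fin N)) : Prop :=
  ∀ (j : ℕ) (h : j + 1 < n),
    s ⟨j, Nat.lt_of_succ_lt h⟩ = s ⟨j + 1, h⟩ →
    s ⟨j, Nat.lt_of_succ_lt h⟩ = none

abbrev S (N n : ℕ) := {s : Fin n → Option (Fin N) // ISI N n s}

/-- Extend a string by one symbol at the end. -/
def ext {n : ℕ} (t : Fin n → Option (Fin N)) (x : Option (Fin N)) :
    Fin (n + 1) → Option (Fin N) :=
  fun i => if h : (i : ℕ) < n then t ⟨i, h⟩ else x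

lemma ext_lt {n : ℕ} (t : Fin n → Option (Fin N)) (x : Option (Fin N))
    (j : ℕ) (hj : j < n) (h : j < n + 1) :
    ext t x ⟨j, h⟩ = t ⟨j, hj⟩ := dif_pos hj

lemma ext_last {n : ℕ} (t : Fin n → Option (Fin N)) (x : Option (Fin N))
    (h : n < n + 1) : ext t x ⟨n, h⟩ = x := dif_neg (lt_irrefl n)

/-- Restrict a string by dropping the last symbol. -/
def res {n : ℕ} (s : Fin (n + 1) → Option (Fin N)) :
    Fin n → Option (Fin N) :=
  fun i => s ⟨i, Nat.lt_succ_of_lt i.2⟩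

lemma res_ext {n : ℕ} (t : Fin n → Option (Fin N)) (x : Option (Fin N)) :
    res (ext t x) = t := by
  funext i
  simp only [res]
  rw [ext_lt t x i i.2]

lemma ext_res {n : ℕ} (s : Fin (n + 1) → Option (Fin N)) (h : n < n + 1) :
    ext (res s) (s ⟨n, h⟩) = s := by
  funext i
  rcases i with ⟨i, hi⟩
  by_cases hin : i < n
  · rw [ext_lt _ _ i hin]
    rfl
  · have : i = n := by omega
    subst this
    rw [ext_last]

lemma isi_res {n : ℕ} {s : Fin (n + 1) → Option (Fin N)}
    (hs : ISI N (n + 1) s) : ISI N n (res s) := by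
  intro j h hj
  exact hs j (Nat.lt_succ_of_lt h) hj

lemma isi_ext {n : ℕ} {t : Fin n → Option (Fin N)} {x : Option (Fin N)}
    (ht : ISI N n t)
    (hx : ∀ (hn : n - 1 < n), t ⟨n - 1, hn⟩ = x → x = none) :
    ISI N (n + 1) (ext t x) := by
  intro j h hj
  by_cases hjn : j + 1 < n
  · rw [ext_lt t x j (by omega)] at hj ⊢
    rw [ext_lt t x (j + 1) hjn] at hj
    exact ht j hjn hj
  · have hjn' : j + 1 = n := by omega
    have hj' : j < n := by omega
    rw [ext_lt t x j hj'] at hj ⊢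
    have hlast : ext t x ⟨j + 1, h⟩ = x := by
      have he : (⟨j + 1, h⟩ : Fin (n + 1)) = ⟨n, by omega⟩ := by
        simp [hjn']
      rw [he]
      exact ext_last t x _
    rw [hlast] at hj
    have hjeq : j = n - 1 := by omega
    subst hjeq
    rw [hj]
    exact hx (by omega) hj

/-- The key map. -/
def F (N n : ℕ) : (Fin N × S N (n + 1)) ⊕ S N n → S N (n + 2) := fun z =>
  match z with
  | .inl (m, t) =>
      ⟨ext t.1 (if t.1 ⟨n, by omega⟩ = some m then none else some m), by
        apply isi_ext t.2
        intro hn heq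
        by_cases hc : t.1 ⟨n, by omega⟩ = some m
        · rw [if_pos hc]
        · simp only [Nat.add_sub_cancel] at heq
          rw [if_neg hc] at heq
          exact absurd heq hc⟩
  | .inr t =>
      ⟨ext (ext t.1 none) none, by
        apply isi_ext
        · apply isi_ext t.2
          intro _ _
          rfl
        · intro _ _
          rfl⟩

lemma F_inj (N n : ℕ) : Function.Injective (F N n) := by
  rintro (⟨m, t⟩ | t) (⟨m', t'⟩ | t') h
  · have h' := congrArg Subtype.val h
    simp only [F] at h'
    have hres : t.1 = t'.1 := by
      have := congrArg res h'
      rwa [res_ext, res_ext] at this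
    have ht : t = t' := Subtype.ext hres
    subst ht
    have hx := congrFun h' ⟨n + 1, by omega⟩
    rw [ext_last, ext_last] at hx
    by_cases hc : t.1 ⟨n, by omega⟩ = some m <;>
      by_cases hc' : t.1 ⟨n, by omega⟩ = some m'
    · have : m = m' := by
        rw [hc] at hc'
        exact (Option.some.injEq _ _ ▸ hc').symm ▸ rfl
      subst this
      rfl
    · rw [if_pos hc, if_neg hc'] at hx
      exact absurd hx.symm (by simp)
    · rw [if_neg hc, if_pos hc'] at hx
      exact absurd hx (by simp)
    · rw [if_neg hc, if_neg hc'] at hx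
      simp only [Option.some.injEq] at hx
      subst hx
      rfl
  · exfalso
    have h' := congrArg Subtype.val h
    simp only [F] at h'
    have hx := congrFun h' ⟨n + 1, by omega⟩
    rw [ext_last, ext_last] at hx
    have hc : t.1 ⟨n, by omega⟩ = some m := by
      by_contra hc
      rw [if_neg hc] at hx
      exact absurd hx (by simp)
    have hn := congrFun h' ⟨n, by omega⟩
    rw [ext_lt t.1 _ n (by omega), ext_lt (ext t'.1 none) none n (by omega),
      ext_last] at hn
    rw [hc] at hn
    exact absurd hn (by simp)
  · exfalso
    have h' := congrArg Subtype.val h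
    simp only [F] at h'
    have hx := congrFun h' ⟨n + 1, by omega⟩
    rw [ext_last, ext_last] at hx
    have hc : t'.1 ⟨n, by omega⟩ = some m' := by
      by_contra hc
      rw [if_neg hc] at hx
      exact absurd hx.symm (by simp)
    have hn := congrFun h' ⟨n, by omega⟩
    rw [ext_lt (ext t.1 none) none n (by omega), ext_last,
      ext_lt t'.1 _ n (by omega)] at hn
    rw [hc] at hn
    exact absurd hn.symm (by simp)
  · have h' := congrArg Subtype.val h
    simp only [F] at h'
    have hres : t.1 = t'.1 := by
      have := congrArg res (congrArg res h')
      rwa [res_ext, res_ext, res_ext, res_ext] at this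
    rw [Subtype.ext hres]

lemma F_surj (N n : ℕ) : Function.Surjective (F N n) := by
  rintro ⟨s, hs⟩
  rcases h1 : s ⟨n + 1, by omega⟩ with _ | m
  · rcases h0 : s ⟨n, by omega⟩ with _ | m
    · refine ⟨.inr ⟨res (res s), isi_res (isi_res hs)⟩, ?_⟩
      apply Subtype.ext
      simp only [F]
      have h0' : res s ⟨n, (by omega : n < n + 1)⟩ = none := h0
      have e1 : ext (res (res s)) (none : Option (Fin N)) = res s := by
        rw [← h0']
        exact ext_res (res s) _
      rw [e1]
      have h1' : s ⟨n + 1, (by omega : n + 1 < n + 2)⟩ = none := h1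
      rw [← h1']
      exact ext_res s _
    · refine ⟨.inl (m, ⟨res s, isi_res hs⟩), ?_⟩
      apply Subtype.ext
      simp only [F]
      have hc : res s ⟨n, (by omega : n < n + 1)⟩ = some m := h0
      rw [if_pos hc]
      have h1' : s ⟨n + 1, (by omega : n + 1 < n + 2)⟩ = none := h1
      rw [← h1']
      exact ext_res s _
  · refine ⟨.inl (m, ⟨res s, isi_res hs⟩), ?_⟩
    apply Subtype.ext
    simp only [F]
    have hne : res s ⟨n, (by omega : n < n + 1)⟩ ≠ some m := by
      intro hcon
      have heq : s ⟨n, Nat.lt_of_succ_lt (by omega : n + 1 < n + 2)⟩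
          = s ⟨n + 1, by omega⟩ := by
        have h0' : s ⟨n, Nat.lt_of_succ_lt (by omega : n + 1 < n + 2)⟩
            = some m := hcon
        rw [h0', h1]
      have hnone := hs n (by omega) heq
      have : (some m : Option (Fin N)) = none := by
        rw [← hnone]
        exact hcon.symm
      exact absurd this (by simp)
    rw [if_neg hne]
    have h1' : s ⟨n + 1, (by omega : n + 1 < n + 2)⟩ = some m := h1
    rw [← h1']
    exact ext_res s _

lemma card_zero (N : ℕ) : Nat.card (S N 0) = 1 := by
  have : Unique (S N 0) :=
    { default := ⟨fun i => i.elim0, fun j h => by omega⟩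
      uniq := fun a => Subtype.ext (funext fun i => i.elim0) }
  exact Nat.card_unique

lemma card_one (N : ℕ) : Nat.card (S N 1) = N + 1 := by
  have e : S N 1 ≃ Option (Fin N) :=
    { toFun := fun s => s.1 0
      invFun := fun o => ⟨fun _ => o, fun j h => by omega⟩
      left_inv := fun s => by
        apply Subtype.ext
        funext i
        have : i = 0 := Subsingleton.elim i 0
        rw [this]
      right_inv := fun o => rfl }
  rw [Nat.card_congr e, Nat.card_eq_fintype_card, Fintype.card_option,
    Fintype.card_fin]

lemma card_rec (N n : ℕ) :
    Nat.card (S N (n + 2)) = N * Nat.card (S N (n + 1)) + Nat.card (S N n) := by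
  rw [← Nat.card_eq_of_bijective (F N n) ⟨F_inj N n, F_surj N n⟩,
    Nat.card_sum, Nat.card_prod, Nat.card_eq_fintype_card (α := Fin N),
    Fintype.card_fin]

end Stmt5Aux

/-- Recurrence for the number of ISI-free strings with `N` molecule types
and channel memory `k = 1`. -/
theorem stmt_5
    (N : ℕ) (t : ℕ → ℕ)
    (ht : ∀ n, t n = Nat.card {s : Fin n → Option (Fin N) //
      ∀ (j : ℕ) (h : j + 1 < n),
        s ⟨j, Nat.lt_of_succ_lt h⟩ = s ⟨j + 1, h⟩ →
        s ⟨j, Nat.lt_of_succ_lt h⟩ = none}) :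
    t 0 = 1 ∧ t 1 = N + 1 ∧ ∀ n, t (n + 2) = N * t (n + 1) + t n := by
  have ht' : ∀ n, t n = Nat.card (Stmt5Aux.S N n) := ht
  refine ⟨?_, ?_, ?_⟩
  · rw [ht' 0, Stmt5Aux.card_zero]
  · rw [ht' 1, Stmt5Aux.card_one]
  · intro n
    rw [ht' (n + 2), ht' (n + 1), ht' n, Stmt5Aux.card_rec]
end

section
/- Let t_N : ℕ → ℕ satisfy t_N(0) = 1, t_N(1) = N+1, t_N(n+2) = N·t_N(n+1) + t_N(n), where N ≥ 1. Then (t_N(n))^(1/n) converges to (N + √(N²+4))/2 as n → ∞. -/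
open Filter

/-- Exponential growth rate of the ISI-free string count with `N` molecule
types: `t_N(n)^(1/n) → (N + √(N² + 4)) / 2`. -/
theorem stmt_6
    (N : ℕ) (hN : 1 ≤ N) (t : ℕ → ℕ)
    (h0 : t 0 = 1) (h1 : t 1 = N + 1)
    (hrec : ∀ n, t (n + 2) = N * t (n + 1) + t n) :
    Tendsto (fun n : ℕ => (t n : ℝ) ^ (1 / (n : ℝ))) atTop
      (nhds (((N : ℝ) + Real.sqrt ((N : ℝ) ^ 2 + 4)) / 2)) := by
  set φ : ℝ := ((N : ℝ) + Real.sqrt ((N : ℝ) ^ 2 + 4)) / 2 with hφdef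
  have hN1 : (1 : ℝ) ≤ N := by exact_mod_cast hN
  have h4 : (0 : ℝ) ≤ (N : ℝ) ^ 2 + 4 := by positivity
  have hs : Real.sqrt ((N : ℝ) ^ 2 + 4) ^ 2 = (N : ℝ) ^ 2 + 4 := Real.sq_sqrt h4
  have hs0 : 0 ≤ Real.sqrt ((N : ℝ) ^ 2 + 4) := Real.sqrt_nonneg _
  have hsle : Real.sqrt ((N : ℝ) ^ 2 + 4) ≤ (N : ℝ) + 2 := by
    rw [show (N : ℝ) + 2 = Real.sqrt (((N : ℝ) + 2) ^ 2) by
      rw [Real.sqrt_sq (by linarith)]]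
    exact Real.sqrt_le_sqrt (by nlinarith)
  have hsge : (1 : ℝ) ≤ Real.sqrt ((N : ℝ) ^ 2 + 4) := by
    rw [show (1 : ℝ) = Real.sqrt 1 by simp]
    exact Real.sqrt_le_sqrt (by nlinarith)
  have hφ1 : 1 ≤ φ := by rw [hφdef]; linarith
  have hφpos : 0 < φ := lt_of_lt_of_le one_pos hφ1
  have hφeq : φ ^ 2 = N * φ + 1 := by
    rw [hφdef]; nlinarith [hs]
  have hφle : φ ≤ (N : ℝ) + 1 := by rw [hφdef]; linarith
  -- bounds: φ^n ≤ t n ≤ (N+1) φ^n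
  have hbound : ∀ n, (φ ^ n ≤ (t n : ℝ) ∧ (t n : ℝ) ≤ ((N : ℝ) + 1) * φ ^ n) ∧
      (φ ^ (n + 1) ≤ (t (n + 1) : ℝ) ∧ (t (n + 1) : ℝ) ≤ ((N : ℝ) + 1) * φ ^ (n + 1)) := by
    intro n
    induction n with
    | zero =>
      refine ⟨⟨by simp [h0], by simp [h0]⟩, ⟨by simp [h1]; linarith, ?_⟩⟩
      simp [h1]
      nlinarith
    | succ k ih =>
      refine ⟨ih.2, ?_, ?_⟩
      · have step : φ ^ (k + 2) = N * φ ^ (k + 1) + φ ^ k := by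
          have : φ ^ (k + 2) = φ ^ k * φ ^ 2 := by ring
          rw [this, hφeq]; ring
        rw [hrec k, step]; push_cast
        have h1' := ih.1.1
        have h2' := ih.2.1
        nlinarith [h1', h2']
      · have step : φ ^ (k + 2) = N * φ ^ (k + 1) + φ ^ k := by
          have : φ ^ (k + 2) = φ ^ k * φ ^ 2 := by ring
          rw [this, hφeq]; ring
        rw [hrec k]; push_cast
        have h1' := ih.1.2
        have h2' := ih.2.2
        nlinarith [h1', h2']
  -- squeeze
  have hupper : Tendsto (fun n : ℕ => ((N : ℝ) + 1) ^ (1 / (n : ℝ)) * φ) atTop (nhds φ) := by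
    have hc : Tendsto (fun n : ℕ => ((N : ℝ) + 1) ^ (1 / (n : ℝ))) atTop (nhds 1) := by
      have h0' : Tendsto (fun n : ℕ => 1 / (n : ℝ)) atTop (nhds 0) :=
        tendsto_one_div_atTop_nhds_zero_nat
      have := (Real.continuousAt_const_rpow (b := (0:ℝ)) (by positivity : ((N:ℝ)+1) ≠ 0)).tendsto.comp h0'
      simpa [Function.comp_def] using this
    have := hc.mul_const φ
    simpa using this
  apply tendsto_of_tendsto_of_tendsto_of_le_of_le' (tendsto_const_nhds) hupper
  · filter_upwards [eventually_ge_atTop 1] with n hn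
    have hn0 : (0 : ℝ) < n := by exact_mod_cast hn
    have h1' := (hbound n).1.1
    have : (φ ^ n) ^ (1 / (n : ℝ)) ≤ (t n : ℝ) ^ (1 / (n : ℝ)) :=
      Real.rpow_le_rpow (by positivity) h1' (by positivity)
    calc φ = (φ ^ n) ^ (1 / (n : ℝ)) := by
          rw [← Real.rpow_natCast φ n, ← Real.rpow_mul hφpos.le]
          rw [mul_one_div, div_self hn0.ne', Real.rpow_one]
      _ ≤ _ := this
  · filter_upwards [eventually_ge_atTop 1] with n hn
    have hn0 : (0 : ℝ) < n := by exact_mod_cast hn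
    have h2' := (hbound n).1.2
    have ht0 : (0 : ℝ) ≤ (t n : ℝ) := by positivity
    have : (t n : ℝ) ^ (1 / (n : ℝ)) ≤ (((N : ℝ) + 1) * φ ^ n) ^ (1 / (n : ℝ)) :=
      Real.rpow_le_rpow ht0 h2' (by positivity)
    calc (t n : ℝ) ^ (1 / (n : ℝ)) ≤ (((N : ℝ) + 1) * φ ^ n) ^ (1 / (n : ℝ)) := this
      _ = ((N : ℝ) + 1) ^ (1 / (n : ℝ)) * φ := by
          rw [Real.mul_rpow (by positivity) (by positivity)]
          congr 1
          rw [← Real.rpow_natCast φ n, ← Real.rpow_mul hφpos.le]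
          rw [mul_one_div, div_self hn0.ne', Real.rpow_one]
end
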